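/- arXiv:2306.16625 — 3 statements merged into one kernel-verified Lean document; each statement's English description precedes it below -/
import Mathlib

section
/- Let K be a flag simplicial complex with at least two vertices. Then either K is a simplex, or K can be written as the union of two nonempty proper full subcomplexes K' and K'' such that their intersection K' ∩ K'' is also a full subcomplex of K. -/
/-- An abstract simplicial complex on the vertex set `Fin m`: a collection of finite
subsets (simplices), containing the empty set, closed under taking subsets. -/
structure SComplex (m : ℕ) where
  faces : Set (Finset (Fin m))
  empty_mem : ∅ ∈ faces
  down_closed : ∀ ⦃s⦄, s ∈ faces → ∀ ⦃t⦄, t ⊆ s → t ∈ faces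

namespace SComplex

variable {m : ℕ}

/-- A simplicial complex is flag if every set of vertices which are pairwise
joined by edges spans a simplex. -/
def IsFlag (K : SComplex m) : Prop :=
  ∀ s : Finset (Fin m), (∀ i ∈ s, ({i} : Finset (Fin m)) ∈ K.faces) →
    (∀ i ∈ s, ∀ j ∈ s, i ≠ j → ({i, j} : Finset (Fin m)) ∈ K.faces) → s ∈ K.faces

/-- The full subcomplex of `K` with respect to a set `I` of vertices. -/
def full (K : SComplex m) (I : Set (Fin m)) : SComplex m where
  faces := {σ | σ ∈ K.faces ∧ ↑σ ⊆ I}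
  empty_mem := ⟨K.empty_mem, by simp⟩
  down_closed := by
    rintro s ⟨hs, hsI⟩ t ht
    exact ⟨K.down_closed hs ht, (Finset.coe_subset.2 ht).trans hsI⟩

/-- The vertex set of a simplicial complex. -/
def vertexSet (K : SComplex m) : Set (Fin m) := {v | ({v} : Finset (Fin m)) ∈ K.faces}

/-- `K` is a simplex: its faces are exactly all subsets of its vertex set. -/
def IsSimplex (K : SComplex m) : Prop :=
  K.faces = {σ : Finset (Fin m) | ↑σ ⊆ K.vertexSet}

end SComplex

/-- A flag complex with at least two vertices is either a simplex, or is
the union of two nonempty proper full subcomplexes whose intersection is again a full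
subcomplex. -/
theorem flag_complex_simplex_or_splits {m : ℕ} (K : SComplex m) (hflag : K.IsFlag)
    (htwo : ∃ v w : Fin m, v ≠ w ∧ ({v} : Finset (Fin m)) ∈ K.faces ∧
      ({w} : Finset (Fin m)) ∈ K.faces) :
    K.IsSimplex ∨
      ∃ I₁ I₂ : Set (Fin m),
        (∃ v, ({v} : Finset (Fin m)) ∈ (K.full I₁).faces) ∧
        (∃ v, ({v} : Finset (Fin m)) ∈ (K.full I₂).faces) ∧
        (K.full I₁).faces ≠ K.faces ∧ (K.full I₂).faces ≠ K.faces ∧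
        K.faces = (K.full I₁).faces ∪ (K.full I₂).faces ∧
        ∃ J : Set (Fin m), (K.full I₁).faces ∩ (K.full I₂).faces = (K.full J).faces := by
  by_cases hall : ∀ v w : Fin m, ({v} : Finset (Fin m)) ∈ K.faces →
      ({w} : Finset (Fin m)) ∈ K.faces → v ≠ w → ({v, w} : Finset (Fin m)) ∈ K.faces
  · left
    ext σ
    simp only [Set.mem_setOf_eq]
    constructor
    · intro hσ i hi
      exact K.down_closed hσ (by simpa using hi)
    · intro hσ
      exact hflag σ (fun i hi => hσ hi)
        (fun i hi j hj hij => hall i j (hσ hi) (hσ hj) hij)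
  · right
    push_neg at hall
    obtain ⟨v, w, hv, hw, hvw, hnot⟩ := hall
    refine ⟨{v}ᶜ, {w}ᶜ, ⟨w, hw, by simpa using hvw⟩, ⟨v, hv, by simpa using Ne.symm hvw⟩, ?_, ?_, ?_, ?_⟩
    · intro h
      have : ({v} : Finset (Fin m)) ∈ (K.full {v}ᶜ).faces := h ▸ hv
      simpa using this.2
    · intro h
      have : ({w} : Finset (Fin m)) ∈ (K.full {w}ᶜ).faces := h ▸ hw
      simpa using this.2
    · ext σ
      constructor
      · intro hσ
        by_cases hvσ : v ∈ σ
        · right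
          refine ⟨hσ, fun x hx => ?_⟩
          simp only [Set.mem_compl_iff, Set.mem_singleton_iff]
          rintro rfl
          exact hnot (K.down_closed hσ (by
            intro y hy
            simp only [Finset.mem_insert, Finset.mem_singleton] at hy
            rcases hy with rfl | rfl
            · exact hvσ
            · exact hx))
        · left
          refine ⟨hσ, fun x hx => ?_⟩
          simp only [Set.mem_compl_iff, Set.mem_singleton_iff]
          rintro rfl
          exact hvσ hx
      · rintro (h | h) <;> exact h.1
    · refine ⟨{v}ᶜ ∩ {w}ᶜ, ?_⟩
      ext σ
      simp only [Set.mem_inter_iff, SComplex.full, Set.mem_setOf_eq, Set.subset_inter_iff]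
      tauto
end

section
/- If a flag complex K is the union K = K_1 ∪_{K_3} K_2 of two flag subcomplexes K_1, K_2 (full in K) along their common intersection K_3, then the graph product G^K is isomorphic to the amalgamated free product G^{K_1} *_{G^{K_3}} G^{K_2}. -/
open Monoid in
/-- The relations of the graph product of the groups indexed by a vertex subset `I`,
with respect to the edges of `K` lying in `I`. -/
def gpRelsOn {m : ℕ} (K : SComplex m) (G : Fin m → Type) [∀ i, Group (G i)]
    (I : Set (Fin m)) : Subgroup (Monoid.CoprodI fun i : I => G i.1) :=
  Subgroup.normalClosure
    {x | ∃ (i j : I) (g : G i.1) (h : G j.1), i.1 ≠ j.1 ∧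
      ({i.1, j.1} : Finset (Fin m)) ∈ K.faces ∧
      x = CoprodI.of (M := fun i : I => G i.1) (i := i) g *
            CoprodI.of (M := fun i : I => G i.1) (i := j) h *
            (CoprodI.of (M := fun i : I => G i.1) (i := i) g)⁻¹ *
            (CoprodI.of (M := fun i : I => G i.1) (i := j) h)⁻¹}

instance {m : ℕ} (K : SComplex m) (G : Fin m → Type) [∀ i, Group (G i)] (I : Set (Fin m)) :
    (gpRelsOn K G I).Normal :=
  Subgroup.normalClosure_normal

/-- The graph product of the groups `G i`, `i ∈ I`, along the full subcomplex `K_I`. -/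
abbrev GraphProdOn {m : ℕ} (K : SComplex m) (G : Fin m → Type) [∀ i, Group (G i)]
    (I : Set (Fin m)) : Type :=
  Monoid.CoprodI (fun i : I => G i.1) ⧸ gpRelsOn K G I

open Monoid

section Aux

variable {m : ℕ} (K : SComplex m) (G : Fin m → Type) [∀ i, Group (G i)]

/-- The canonical generator map into a graph product. -/
def gpOf {I : Set (Fin m)} (i : ↥I) : G i.1 →* GraphProdOn K G I :=
  (QuotientGroup.mk' _).comp (Monoid.CoprodI.of (M := fun i : I => G i.1) (i := i))

lemma gpOf_apply {I : Set (Fin m)} (i : ↥I) (g : G i.1) :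
    gpOf K G i g = QuotientGroup.mk (Monoid.CoprodI.of (M := fun i : I => G i.1) (i := i) g) :=
  rfl

lemma gp_comm {I : Set (Fin m)} (i j : ↥I) (hne : i.1 ≠ j.1)
    (hface : ({i.1, j.1} : Finset (Fin m)) ∈ K.faces) (g : G i.1) (h : G j.1) :
    gpOf K G i g * gpOf K G j h * (gpOf K G i g)⁻¹ * (gpOf K G j h)⁻¹ = 1 := by
  rw [gpOf_apply, gpOf_apply, ← QuotientGroup.mk_inv, ← QuotientGroup.mk_inv,
    ← QuotientGroup.mk_mul, ← QuotientGroup.mk_mul, ← QuotientGroup.mk_mul,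
    QuotientGroup.eq_one_iff]
  exact Subgroup.subset_normalClosure ⟨i, j, g, h, hne, hface, rfl⟩

/-- Inclusion-induced map between graph products. -/
def gpIncl {I J : Set (Fin m)} (hIJ : I ⊆ J) : GraphProdOn K G I →* GraphProdOn K G J :=
  QuotientGroup.lift _ ((QuotientGroup.mk' _).comp
      (Monoid.CoprodI.lift fun i =>
        Monoid.CoprodI.of (M := fun j : J => G j.1) (i := ⟨i.1, hIJ i.2⟩))) <| by
    apply Subgroup.normalClosure_le_normal
    rintro x ⟨i, j, g, h, hne, hface, rfl⟩
    have := gp_comm K G (⟨i.1, hIJ i.2⟩ : ↥J) ⟨j.1, hIJ j.2⟩ hne hface g h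
    simpa [MonoidHom.mem_ker, gpOf_apply] using this

lemma gpIncl_of {I J : Set (Fin m)} (hIJ : I ⊆ J) (i : ↥I) (g : G i.1) :
    gpIncl K G hIJ (QuotientGroup.mk (Monoid.CoprodI.of (M := fun i : I => G i.1) (i := i) g)) =
      QuotientGroup.mk
        (Monoid.CoprodI.of (M := fun j : J => G j.1) (i := ⟨i.1, hIJ i.2⟩) g) := by
  exact (show ((QuotientGroup.mk' (gpRelsOn K G J)).comp (Monoid.CoprodI.lift fun i : I =>
      Monoid.CoprodI.of (M := fun j : J => G j.1) (i := ⟨i.1, hIJ i.2⟩)))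
      (Monoid.CoprodI.of (M := fun i : I => G i.1) (i := i) g) = QuotientGroup.mk
        (Monoid.CoprodI.of (M := fun j : J => G j.1) (i := ⟨i.1, hIJ i.2⟩) g) by simp)

end Aux

set_option maxHeartbeats 2000000 in
/-- If a flag complex `K` is the union of two full flag subcomplexes
`K_{I₁}`, `K_{I₂}` along their intersection `K_{I₁ ∩ I₂}`, then the graph product `G^K`
is the amalgamated free product `G^{K_{I₁}} *_{G^{K_{I₁ ∩ I₂}}} G^{K_{I₂}}`. -/
theorem graphProd_amalgam {m : ℕ} (K : SComplex m) (hflag : K.IsFlag)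
    (hvert : ∀ i : Fin m, ({i} : Finset (Fin m)) ∈ K.faces)
    (G : Fin m → Type) [∀ i, Group (G i)]
    (I₁ I₂ : Set (Fin m))
    (hcover : ∀ σ ∈ K.faces, ↑σ ⊆ I₁ ∨ ↑σ ⊆ I₂)
    (φ : ∀ b : Bool, GraphProdOn K G (I₁ ∩ I₂) →* GraphProdOn K G (cond b I₁ I₂))
    (hφ₁ : ∀ (i : ↥(I₁ ∩ I₂)) (g : G i.1),
      φ true (QuotientGroup.mk (Monoid.CoprodI.of g)) =
        QuotientGroup.mk (Monoid.CoprodI.of (i := (⟨i.1, i.2.1⟩ : ↥I₁)) g))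
    (hφ₂ : ∀ (i : ↥(I₁ ∩ I₂)) (g : G i.1),
      φ false (QuotientGroup.mk (Monoid.CoprodI.of g)) =
        QuotientGroup.mk (Monoid.CoprodI.of (i := (⟨i.1, i.2.2⟩ : ↥I₂)) g))
    (hinj : ∀ b, Function.Injective (φ b)) :
    Nonempty (GraphProdOn K G Set.univ ≃* Monoid.PushoutI φ) := by
  classical
  have hmem : ∀ i : Fin m, i ∈ I₁ ∨ i ∈ I₂ := by
    intro i
    rcases hcover {i} (hvert i) with h | h
    · exact Or.inl (h (by simp))
    · exact Or.inr (h (by simp))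
  -- the family of maps into the pushout
  set f : ∀ i : (Set.univ : Set (Fin m)), G i.1 →* PushoutI φ := fun i =>
    if h : i.1 ∈ I₁ then
      (PushoutI.of (φ := φ) true).comp (gpOf K G (⟨i.1, h⟩ : ↥I₁))
    else
      (PushoutI.of (φ := φ) false).comp
        (gpOf K G (⟨i.1, (hmem i.1).resolve_left h⟩ : ↥I₂)) with hf
  have key : ∀ (i : Fin m) (h₁ : i ∈ I₁) (h₂ : i ∈ I₂) (g : G i),
      PushoutI.of (φ := φ) true (gpOf K G (⟨i, h₁⟩ : ↥I₁) g) =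
        PushoutI.of (φ := φ) false (gpOf K G (⟨i, h₂⟩ : ↥I₂) g) := by
    intro i h₁ h₂ g
    have e₁ := hφ₁ ⟨i, h₁, h₂⟩ g
    have e₂ := hφ₂ ⟨i, h₁, h₂⟩ g
    calc PushoutI.of (φ := φ) true (gpOf K G (⟨i, h₁⟩ : ↥I₁) g)
        = PushoutI.of (φ := φ) true (φ true (QuotientGroup.mk
            (Monoid.CoprodI.of (M := fun i : ↥(I₁ ∩ I₂) => G i.1) (i := ⟨i, h₁, h₂⟩) g))) := by
          rw [e₁]; rfl
      _ = PushoutI.base φ _ := PushoutI.of_apply_eq_base φ true _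
      _ = PushoutI.of (φ := φ) false (φ false (QuotientGroup.mk
            (Monoid.CoprodI.of (M := fun i : ↥(I₁ ∩ I₂) => G i.1) (i := ⟨i, h₁, h₂⟩) g))) :=
          (PushoutI.of_apply_eq_base φ false _).symm
      _ = PushoutI.of (φ := φ) false (gpOf K G (⟨i, h₂⟩ : ↥I₂) g) := by
          rw [e₂]; rfl
  have f_eq₁ : ∀ (i : (Set.univ : Set (Fin m))) (h₁ : i.1 ∈ I₁) (g : G i.1),
      f i g = PushoutI.of (φ := φ) true (gpOf K G (⟨i.1, h₁⟩ : ↥I₁) g) := by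
    intro i h₁ g
    simp [hf, dif_pos h₁]
  have f_eq₂ : ∀ (i : (Set.univ : Set (Fin m))) (h₂ : i.1 ∈ I₂) (g : G i.1),
      f i g = PushoutI.of (φ := φ) false (gpOf K G (⟨i.1, h₂⟩ : ↥I₂) g) := by
    intro i h₂ g
    by_cases h₁ : i.1 ∈ I₁
    · rw [f_eq₁ i h₁ g, key i.1 h₁ h₂ g]
    · simp [hf, dif_neg h₁]
  -- the forward map
  have hker : gpRelsOn K G Set.univ ≤ (Monoid.CoprodI.lift f).ker := by
    apply Subgroup.normalClosure_le_normal
    rintro x ⟨i, j, g, h, hne, hface, rfl⟩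
    simp only [SetLike.mem_coe, MonoidHom.mem_ker, map_mul, map_inv, Monoid.CoprodI.lift_of]
    rcases hcover {i.1, j.1} hface with hsub | hsub
    · have hi : i.1 ∈ I₁ := hsub (by simp)
      have hj : j.1 ∈ I₁ := hsub (by simp)
      rw [f_eq₁ i hi g, f_eq₁ j hj h, ← map_inv (PushoutI.of (φ := φ) true), ← map_inv (PushoutI.of (φ := φ) true), ← map_mul, ← map_mul, ← map_mul,
        gp_comm K G (⟨i.1, hi⟩ : ↥I₁) (⟨j.1, hj⟩ : ↥I₁) hne hface g h, map_one]
    · have hi : i.1 ∈ I₂ := hsub (by simp)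
      have hj : j.1 ∈ I₂ := hsub (by simp)
      rw [f_eq₂ i hi g, f_eq₂ j hj h, ← map_inv (PushoutI.of (φ := φ) false), ← map_inv (PushoutI.of (φ := φ) false), ← map_mul, ← map_mul, ← map_mul,
        gp_comm K G (⟨i.1, hi⟩ : ↥I₂) (⟨j.1, hj⟩ : ↥I₂) hne hface g h, map_one]
  set F : GraphProdOn K G Set.univ →* PushoutI φ :=
    QuotientGroup.lift _ (Monoid.CoprodI.lift f) hker with hF
  have F_of : ∀ (i : (Set.univ : Set (Fin m))) (g : G i.1),
      F (QuotientGroup.mk (Monoid.CoprodI.of g)) = f i g := by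
    intro i g
    simp [hF]
  -- the backward map
  have hcompat : ∀ b : Bool,
      (gpIncl K G (Set.subset_univ (cond b I₁ I₂))).comp (φ b) =
        gpIncl K G (Set.subset_univ (I₁ ∩ I₂)) := by
    intro b
    apply QuotientGroup.monoidHom_ext
    apply Monoid.CoprodI.ext_hom
    intro i
    ext g
    simp only [MonoidHom.comp_apply, QuotientGroup.mk'_apply]
    cases b with
    | true =>
        rw [hφ₁ i g, gpIncl_of]
        exact gpIncl_of K G (Set.subset_univ I₁) ⟨i.1, i.2.1⟩ g
    | false =>
        rw [hφ₂ i g, gpIncl_of]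
        exact gpIncl_of K G (Set.subset_univ I₂) ⟨i.1, i.2.2⟩ g
  set B : PushoutI φ →* GraphProdOn K G Set.univ :=
    PushoutI.lift (fun b => gpIncl K G (Set.subset_univ (cond b I₁ I₂)))
      (gpIncl K G (Set.subset_univ (I₁ ∩ I₂))) hcompat with hB
  have hBF : B.comp F = MonoidHom.id _ := by
    apply QuotientGroup.monoidHom_ext
    apply Monoid.CoprodI.ext_hom
    intro i
    ext g
    simp only [MonoidHom.comp_apply, QuotientGroup.mk'_apply, MonoidHom.id_apply]
    rw [F_of i g]
    by_cases h₁ : i.1 ∈ I₁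
    · rw [f_eq₁ i h₁ g]
      simp only [hB, gpOf_apply, PushoutI.lift_of]
      exact gpIncl_of K G (Set.subset_univ I₁) ⟨i.1, h₁⟩ g
    · have h₂ : i.1 ∈ I₂ := (hmem i.1).resolve_left h₁
      rw [f_eq₂ i h₂ g]
      simp only [hB, gpOf_apply, PushoutI.lift_of]
      exact gpIncl_of K G (Set.subset_univ I₂) ⟨i.1, h₂⟩ g
  have hFB : F.comp B = MonoidHom.id _ := by
    apply PushoutI.hom_ext_nonempty
    intro b
    apply QuotientGroup.monoidHom_ext
    apply Monoid.CoprodI.ext_hom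
    intro i
    ext g
    simp only [MonoidHom.comp_apply, QuotientGroup.mk'_apply, MonoidHom.id_apply]
    cases b with
    | true =>
        have hb : B (PushoutI.of (φ := φ) true (QuotientGroup.mk (Monoid.CoprodI.of g))) =
            QuotientGroup.mk (Monoid.CoprodI.of
              (M := fun i : (Set.univ : Set (Fin m)) => G i.1) (i := ⟨i.1, trivial⟩) g) := by
          simp only [hB, PushoutI.lift_of]
          exact gpIncl_of K G (Set.subset_univ I₁) (⟨i.1, i.2⟩ : ↥I₁) g
        rw [hb, F_of ⟨i.1, trivial⟩ g,
          f_eq₁ ⟨i.1, trivial⟩ (show (i.1 : Fin m) ∈ I₁ from i.2) g]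
        rfl
    | false =>
        have hb : B (PushoutI.of (φ := φ) false (QuotientGroup.mk (Monoid.CoprodI.of g))) =
            QuotientGroup.mk (Monoid.CoprodI.of
              (M := fun i : (Set.univ : Set (Fin m)) => G i.1) (i := ⟨i.1, trivial⟩) g) := by
          simp only [hB, PushoutI.lift_of]
          exact gpIncl_of K G (Set.subset_univ I₂) (⟨i.1, i.2⟩ : ↥I₂) g
        rw [hb, F_of ⟨i.1, trivial⟩ g,
          f_eq₂ ⟨i.1, trivial⟩ (show (i.1 : Fin m) ∈ I₂ from i.2) g]
        rfl
  exact ⟨MonoidHom.toMulEquiv F B hBF hFB⟩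
end

section
/- Let K^1 be the 1-skeleton of a flag complex K. Then K^1 is a chordal graph if and only if H_1(K_I; k) = 0 for every full subcomplex K_I of K (for a field k). -/
/-- The simplicial boundary of a single (oriented) simplex, with orientation induced
by the natural order on `Fin m`. -/
noncomputable def bdryChain (k : Type) [Field k] {m : ℕ} (σ : Finset (Fin m)) :
    Finset (Fin m) →₀ k :=
  ∑ i ∈ σ, ((-1 : k) ^ (σ.filter (· < i)).card) • Finsupp.single (σ.erase i) (1 : k)

/-- The simplicial boundary operator on chains with coefficients in `k`. -/
noncomputable def bdry (k : Type) [Field k] (m : ℕ) :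
    (Finset (Fin m) →₀ k) →ₗ[k] (Finset (Fin m) →₀ k) :=
  Finsupp.lsum k fun σ => LinearMap.toSpanSingleton k _ (bdryChain k σ)

section Helpers

universe u
variable {α : Type u}

lemma chain'_concat_iff (R : α → α → Prop) (L : List α) (hL : L ≠ []) (a : α) :
    List.Chain' R (L ++ [a]) ↔ List.Chain' R L ∧ R (L.getLast hL) a := by
  simp only [List.Chain']
  rw [List.isChain_append]
  simp [List.getLast?_eq_getLast hL]

lemma chain'_and {R S : α → α → Prop} {L : List α} (h1 : List.Chain' R L)
    (h2 : List.Chain' S L) : List.Chain' (fun a b => R a b ∧ S a b) L := by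
  simp only [List.Chain', List.isChain_iff_getElem] at *
  exact fun i h => ⟨h1 i h, h2 i h⟩

lemma chain'_imp_mem {R S : α → α → Prop} {L : List α}
    (h : ∀ u v, u ∈ L → v ∈ L → R u v → S u v) (hc : List.Chain' R L) :
    List.Chain' S L := by
  simp only [List.Chain', List.isChain_iff_getElem] at *
  exact fun i hi => h _ _ (List.getElem_mem _) (List.getElem_mem _) (hc i hi)

lemma closed_chain_rotate (R : α → α → Prop) (c : List α)
    (h : List.Chain' R (c ++ c.take 1)) (n : ℕ) :
    List.Chain' R (c.rotate n ++ (c.rotate n).take 1) := by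
  induction n with
  | zero => simpa using h
  | succ n ih =>
    rw [← List.rotate_rotate]
    generalize hd : c.rotate n = d at ih
    rcases d with _ | ⟨a, l⟩
    · simpa using ih
    rcases l with _ | ⟨b, l⟩
    · simpa using ih
    · have h1 : List.Chain' R ((a :: b :: l) ++ [a]) := ih
      have hr : (a :: b :: l).rotate 1 = (b :: l) ++ [a] := by
        simp [List.rotate_cons_succ]
      rw [hr]
      have htk : ((b :: l) ++ [a]).take 1 = [b] := rfl
      rw [htk]
      have h2 : List.Chain' R (a :: ((b :: l) ++ [a])) := by simpa using h1
      rcases List.isChain_cons_cons.1 h2 with ⟨hab, h3⟩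
      rw [chain'_concat_iff R ((b :: l) ++ [a]) (by simp) b]
      refine ⟨h3, ?_⟩
      have : ((b :: l) ++ [a]).getLast (by simp) = a := by
        simp [List.getLast_append]
      rw [this]
      exact hab

lemma infix_snoc {M : List α} {a u v : α} (h : [u, v] <:+: M ++ [a]) :
    [u, v] <:+: M ∨ (v = a ∧ M.getLast? = some u) := by
  obtain ⟨s, t, hst⟩ := h
  rcases List.eq_nil_or_concat t with rfl | ⟨t', z, rfl⟩
  · right
    have h2 : (s ++ [u]) ++ [v] = M ++ [a] := by simpa using hst
    have hv : v = a := by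
      have := congrArg List.getLast? h2
      simpa using this
    have hM : s ++ [u] = M := by
      have := congrArg List.dropLast h2
      simpa using this
    exact ⟨hv, by rw [← hM]; simp⟩
  · left
    simp only [List.concat_eq_append] at hst
    rw [← List.append_assoc] at hst
    have hM : s ++ [u, v] ++ t' = M := (List.append_inj' hst rfl).1
    exact ⟨s, t', hM⟩

lemma pair_cases {a b u v : α} [DecidableEq α] (hab : a ≠ b)
    (h : ({a, b} : Finset α) = {u, v}) : (u = a ∧ v = b) ∨ (u = b ∧ v = a) := by
  have hu : u = a ∨ u = b := by
    have : u ∈ ({a, b} : Finset α) := by rw [h]; simp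
    simpa using this
  have hv : v = a ∨ v = b := by
    have : v ∈ ({a, b} : Finset α) := by rw [h]; simp
    simpa using this
  have ha : a = u ∨ a = v := by
    have : a ∈ ({u, v} : Finset α) := by rw [← h]; simp
    simpa using this
  have hb : b = u ∨ b = v := by
    have : b ∈ ({u, v} : Finset α) := by rw [← h]; simp
    simpa using this
  rcases hu with rfl | rfl <;> rcases hv with h1 | h1 <;> tauto

end Helpers

section ChordalProof
variable (k : Type) [Field k] {m : ℕ}


lemma bdry_eq_sum (x : Finset (Fin m) →₀ k) :
    bdry k m x = x.sum fun σ a => a • bdryChain k σ := by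
  simp [bdry, Finsupp.lsum_apply, LinearMap.toSpanSingleton_apply]
  rfl

lemma bdry_single (σ : Finset (Fin m)) (a : k) :
    bdry k m (Finsupp.single σ a) = a • bdryChain k σ := by
  rw [bdry_eq_sum]
  exact Finsupp.sum_single_index (by simp)

lemma bdryChain_pair {a b : Fin m} (h : a < b) :
    bdryChain k ({a, b} : Finset (Fin m)) =
      Finsupp.single {b} (1 : k) - Finsupp.single {a} 1 := by
  have hne : a ≠ b := h.ne
  have h1 : ({a, b} : Finset (Fin m)).filter (· < a) = ∅ := by
    ext x
    simp only [Finset.mem_filter, Finset.mem_insert, Finset.mem_singleton,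
      Finset.notMem_empty, iff_false, not_and]
    rintro (rfl | rfl)
    · exact lt_irrefl _
    · exact (h.le.not_gt)
  have h2 : ({a, b} : Finset (Fin m)).filter (· < b) = {a} := by
    ext x
    simp only [Finset.mem_filter, Finset.mem_insert, Finset.mem_singleton]
    constructor
    · rintro ⟨rfl | rfl, hx⟩
      · rfl
      · exact absurd hx (lt_irrefl _)
    · rintro rfl
      exact ⟨Or.inl rfl, h⟩
  have e1 : ({a, b} : Finset (Fin m)).erase a = {b} := by
    rw [Finset.erase_insert (by simpa using hne)]
  have e2 : ({a, b} : Finset (Fin m)).erase b = {a} := by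
    rw [Finset.erase_insert_of_ne hne, Finset.erase_singleton]
    rfl
  rw [bdryChain, Finset.sum_pair hne, h1, h2, e1, e2]
  simp [sub_eq_add_neg]

noncomputable def edgeChain (u v : Fin m) : Finset (Fin m) →₀ k :=
  if u < v then Finsupp.single {u, v} 1 else -Finsupp.single {u, v} 1

lemma bdry_edgeChain {u v : Fin m} (h : u ≠ v) :
    bdry k m (edgeChain k u v) =
      Finsupp.single {v} (1 : k) - Finsupp.single {u} 1 := by
  rcases h.lt_or_gt with hlt | hlt
  · rw [edgeChain, if_pos hlt, bdry_single, bdryChain_pair k hlt, one_smul]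
  · rw [edgeChain, if_neg (asymm hlt), map_neg, bdry_single, Finset.pair_comm,
      bdryChain_pair k hlt, one_smul]
    abel

lemma edgeChain_comm {u v : Fin m} (h : u ≠ v) :
    edgeChain k v u = -edgeChain k u v := by
  rcases h.lt_or_gt with hlt | hlt
  · rw [edgeChain, edgeChain, if_neg (asymm hlt), if_pos hlt, Finset.pair_comm]
  · rw [edgeChain, edgeChain, if_pos hlt, if_neg (asymm hlt), Finset.pair_comm, neg_neg]

lemma support_edgeChain (u v : Fin m) :
    (edgeChain k u v).support ⊆ {({u, v} : Finset (Fin m))} := by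
  rw [edgeChain]
  split
  · exact Finsupp.support_single_subset
  · rw [Finsupp.support_neg]
    exact Finsupp.support_single_subset

lemma edgeChain_apply_self (u v : Fin m) :
    edgeChain k u v ({u, v} : Finset (Fin m)) ≠ 0 := by
  rw [edgeChain]
  split <;> simp

noncomputable def pathChain : List (Fin m) → (Finset (Fin m) →₀ k)
  | a :: b :: l => edgeChain k a b + pathChain (b :: l)
  | _ => 0

@[simp] lemma pathChain_nil : pathChain k ([] : List (Fin m)) = 0 := rfl
@[simp] lemma pathChain_single (a : Fin m) : pathChain k [a] = 0 := rfl
@[simp] lemma pathChain_cons (a b : Fin m) (l : List (Fin m)) :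
    pathChain k (a :: b :: l) = edgeChain k a b + pathChain k (b :: l) := rfl

lemma bdry_pathChain : ∀ (a : Fin m) (l : List (Fin m)),
    List.Chain' (· ≠ ·) (a :: l) →
    bdry k m (pathChain k (a :: l)) =
      Finsupp.single ({(a :: l).getLast (by simp)} : Finset (Fin m)) (1 : k) - Finsupp.single ({a} : Finset (Fin m)) 1
  | a, [], _ => by simp
  | a, b :: l, h => by
    rw [pathChain_cons, map_add, bdry_edgeChain k (List.isChain_cons_cons.1 h).1,
      bdry_pathChain b l (List.isChain_cons_cons.1 h).2]
    have hg : (a :: b :: l).getLast (by simp) = (b :: l).getLast (by simp) :=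
      List.getLast_cons (by simp)
    rw [hg]
    abel

lemma support_pathChain : ∀ (l : List (Fin m)), ∀ σ ∈ (pathChain k l).support,
    ∃ u v : Fin m, σ = {u, v} ∧ [u, v] <:+: l
  | [] => by simp
  | [a] => by simp
  | a :: b :: l => by
    intro σ hσ
    rcases Finset.mem_union.1 (Finsupp.support_add hσ) with h | h
    · exact ⟨a, b, Finset.mem_singleton.1 (support_edgeChain k a b h),
        ⟨[], l, rfl⟩⟩
    · obtain ⟨u, v, rfl, hinf⟩ := support_pathChain (b :: l) σ h
      exact ⟨u, v, rfl, hinf.trans (List.infix_cons List.infix_rfl)⟩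

lemma pathChain_split : ∀ (L₁ : List (Fin m)) (x : Fin m) (L₂ : List (Fin m)),
    pathChain k (L₁ ++ x :: L₂) = pathChain k (L₁ ++ [x]) + pathChain k (x :: L₂)
  | [], x, L₂ => by simp
  | [a], x, L₂ => by simp
  | a :: b :: L₁, x, L₂ => by
    simp only [List.cons_append, pathChain_cons]
    have ih := pathChain_split (b :: L₁) x L₂
    simp only [List.cons_append] at ih
    rw [ih]
    abel

noncomputable def cycChain (a : Fin m) (l : List (Fin m)) : Finset (Fin m) →₀ k :=
  pathChain k ((a :: l) ++ [a])

lemma closed_ne_chain (a : Fin m) (l : List (Fin m)) (hnd : (a :: l).Nodup)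
    (hl : l ≠ []) : List.Chain' (· ≠ ·) ((a :: l) ++ [a]) := by
  rw [chain'_concat_iff _ _ (by simp) a]
  refine ⟨List.Pairwise.isChain hnd, ?_⟩
  rw [List.getLast_cons hl]
  intro h
  exact (List.nodup_cons.1 hnd).1 (h ▸ List.getLast_mem hl)

lemma bdry_cycChain (a : Fin m) (l : List (Fin m)) (hnd : (a :: l).Nodup)
    (hl : l ≠ []) : bdry k m (cycChain k a l) = 0 := by
  have hch : List.Chain' (· ≠ ·) (a :: (l ++ [a])) := by
    simpa using closed_ne_chain a l hnd hl
  have := bdry_pathChain k a (l ++ [a]) hch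
  have hg : (a :: (l ++ [a])).getLast (by simp) = a := by
    rw [List.getLast_cons (by simp)]
    exact List.getLast_append _
  rw [hg] at this
  rw [cycChain]
  simpa using this

lemma support_cycChain (a : Fin m) (l : List (Fin m)) :
    ∀ σ ∈ (cycChain k a l).support,
      ∃ u v : Fin m, σ = {u, v} ∧ [u, v] <:+: (a :: l) ++ [a] :=
  support_pathChain k _

lemma pair_infix_chain {R : Fin m → Fin m → Prop} {L : List (Fin m)} {u v : Fin m}
    (hc : List.Chain' R L) (h : [u, v] <:+: L) : R u v :=
  (List.isChain_cons_cons.1 (hc.infix h)).1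

lemma cycChain_coef (a b : Fin m) (l' : List (Fin m))
    (hnd : (a :: b :: l').Nodup) (hl : l' ≠ []) :
    cycChain k a (b :: l') ({a, b} : Finset (Fin m)) ≠ 0 := by
  have hab : a ≠ b := by
    intro h
    exact (List.nodup_cons.1 hnd).1 (h ▸ List.mem_cons_self)
  have hexp : cycChain k a (b :: l') =
      edgeChain k a b + pathChain k (b :: (l' ++ [a])) := rfl
  rw [hexp, Finsupp.add_apply]
  have hz : pathChain k (b :: (l' ++ [a])) ({a, b} : Finset (Fin m)) = 0 := by
    by_contra hne
    have hmem : ({a, b} : Finset (Fin m)) ∈ (pathChain k (b :: (l' ++ [a]))).support :=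
      Finsupp.mem_support_iff.2 hne
    obtain ⟨u, v, huv, hinf⟩ := support_pathChain k _ _ hmem
    have hinf' : [u, v] <:+: (b :: l') ++ [a] := by simpa using hinf
    have haM : a ∉ b :: l' := by
      intro h
      exact (List.nodup_cons.1 hnd).1 h
    rcases pair_cases hab huv with ⟨hu, hv⟩ | ⟨hu, hv⟩
    · rcases infix_snoc hinf' with h | ⟨hva, _⟩
      · exact haM (hu ▸ h.subset (by simp))
      · rw [hv] at hva
        exact hab hva.symm
    · rcases infix_snoc hinf' with h | ⟨_, hlast⟩
      · exact haM (hv ▸ h.subset (by simp))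
      · -- getLast? (b :: l') = some b, impossible since l' ≠ [] and nodup
        rw [hu] at hlast
        have h1 : (b :: l').getLast? = some ((b :: l').getLast (by simp)) :=
          List.getLast?_eq_getLast _
        rw [hlast] at h1
        have h2 : (b :: l').getLast (by simp) = b := by
          exact (Option.some_injective _ h1.symm)
        rw [List.getLast_cons hl] at h2
        have : b ∈ l' := h2 ▸ List.getLast_mem hl
        exact (List.nodup_cons.1 (List.nodup_cons.1 hnd).2).1 this
  rw [hz, add_zero]
  exact edgeChain_apply_self k a b

lemma closed_get_lt (c : List (Fin m)) (a : Fin m) {i : ℕ} (hi : i < c.length)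
    (hp : i < (c ++ [a]).length) : (c ++ [a]).get ⟨i, hp⟩ = c.get ⟨i, hi⟩ := by
  simp only [List.get_eq_getElem]
  exact List.getElem_append_left hi

lemma closed_chain_iff_fin (R : Fin m → Fin m → Prop) (a : Fin m) (l : List (Fin m)) :
    List.Chain' R ((a :: l) ++ [a]) ↔
      ∀ j : Fin (a :: l).length,
        R ((a :: l).get j)
          ((a :: l).get ⟨(j.1 + 1) % (a :: l).length,
            Nat.mod_lt _ (Nat.succ_pos _)⟩) := by
  have hget : ∀ (i : ℕ) (hi : i + 1 ≤ (a :: l).length)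
      (hp : i + 1 < ((a :: l) ++ [a]).length),
      ((a :: l) ++ [a]).get ⟨i + 1, hp⟩ =
      (a :: l).get ⟨(i + 1) % (a :: l).length, Nat.mod_lt _ (Nat.succ_pos _)⟩ := by
    intro i hi hp
    rcases Nat.lt_or_ge (i + 1) (a :: l).length with hlt | hge
    · rw [closed_get_lt _ _ hlt]
      congr 1
      exact Fin.ext (Nat.mod_eq_of_lt hlt).symm
    · have heq : i + 1 = (a :: l).length := le_antisymm hi hge
      have h0 : (i + 1) % (a :: l).length = 0 := by rw [heq, Nat.mod_self]
      simp only [List.get_eq_getElem]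
      rw [List.getElem_append_right (le_of_eq heq.symm)]
      simp [heq, h0]
  rw [show List.Chain' R ((a :: l) ++ [a]) ↔ ∀ (i : ℕ) (h : i < ((a :: l) ++ [a]).length - 1),
      R (((a :: l) ++ [a]).get ⟨i, by omega⟩) (((a :: l) ++ [a]).get ⟨i + 1, by omega⟩) from by
    simp only [List.Chain', List.isChain_iff_getElem, List.get_eq_getElem]
    exact ⟨fun H i h => H i (by omega), fun H i h => H i (by omega)⟩]
  constructor
  · intro H j
    have hj : j.1 < (a :: l).length := j.2
    have := H j.1 (by simpa using hj)
    rw [closed_get_lt _ _ hj, hget j.1 hj] at this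
    exact this
  · intro H i hi
    have hi' : i < (a :: l).length := by simpa using hi
    have := H ⟨i, hi'⟩
    rw [closed_get_lt _ _ hi', hget i hi']
    exact this

lemma bdryChain_triple {a b c : Fin m} (hab : a < b) (hbc : b < c) :
    bdryChain k ({a, b, c} : Finset (Fin m)) =
      Finsupp.single {b, c} (1 : k) - Finsupp.single {a, c} 1 +
        Finsupp.single {a, b} 1 := by
  have hac : a < c := hab.trans hbc
  have hab' : a ≠ b := hab.ne
  have hbc' : b ≠ c := hbc.ne
  have hac' : a ≠ c := hac.ne
  have hmem : a ∉ ({b, c} : Finset (Fin m)) := by simp [hab', hac']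
  have f1 : ({a, b, c} : Finset (Fin m)).filter (· < a) = ∅ := by
    ext x
    simp only [Finset.mem_filter, Finset.mem_insert, Finset.mem_singleton,
      Finset.notMem_empty, iff_false, not_and]
    rintro (rfl | rfl | rfl)
    · exact lt_irrefl _
    · exact hab.le.not_gt
    · exact hac.le.not_gt
  have f2 : ({a, b, c} : Finset (Fin m)).filter (· < b) = {a} := by
    ext x
    simp only [Finset.mem_filter, Finset.mem_insert, Finset.mem_singleton]
    constructor
    · rintro ⟨rfl | rfl | rfl, hx⟩
      · rfl
      · exact absurd hx (lt_irrefl _)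
      · exact absurd hx hbc.le.not_gt
    · rintro rfl
      exact ⟨Or.inl rfl, hab⟩
  have f3 : ({a, b, c} : Finset (Fin m)).filter (· < c) = {a, b} := by
    ext x
    simp only [Finset.mem_filter, Finset.mem_insert, Finset.mem_singleton]
    constructor
    · rintro ⟨rfl | rfl | rfl, hx⟩
      · exact Or.inl rfl
      · exact Or.inr rfl
      · exact absurd hx (lt_irrefl _)
    · rintro (rfl | rfl)
      · exact ⟨Or.inl rfl, hac⟩
      · exact ⟨Or.inr (Or.inl rfl), hbc⟩
  have e1 : ({a, b, c} : Finset (Fin m)).erase a = {b, c} :=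
    Finset.erase_insert hmem
  have e2 : ({a, b, c} : Finset (Fin m)).erase b = {a, c} := by
    rw [Finset.erase_insert_of_ne hab', Finset.erase_insert (by simpa using hbc')]
  have e3 : ({a, b, c} : Finset (Fin m)).erase c = {a, b} := by
    rw [Finset.erase_insert_of_ne hac', Finset.erase_insert_of_ne hbc',
      Finset.erase_singleton]
    rfl
  rw [bdryChain, Finset.sum_insert hmem, Finset.sum_pair hbc']
  rw [f1, f2, f3, e1, e2, e3]
  simp [Finset.card_insert_of_notMem (by simp [hab'] : a ∉ ({b} : Finset (Fin m))),
    sub_eq_add_neg]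
  abel

lemma tri_fill_sorted {a b c : Fin m} (hab : a < b) (hbc : b < c) :
    ∃ w : Finset (Fin m) →₀ k, w.support ⊆ {({a, b, c} : Finset (Fin m))} ∧
      bdry k m w = edgeChain k a b + edgeChain k b c + edgeChain k c a := by
  have hac : a < c := hab.trans hbc
  refine ⟨Finsupp.single {a, b, c} 1, Finsupp.support_single_subset, ?_⟩
  rw [bdry_single, one_smul, bdryChain_triple k hab hbc]
  rw [edgeChain, if_pos hab, edgeChain, if_pos hbc, edgeChain, if_neg (asymm hac),
    Finset.pair_comm c a]
  abel

lemma neg_fill {τ : Finset (Fin m)} {w : Finset (Fin m) →₀ k}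
    (hs : w.support ⊆ {τ}) {E : Finset (Fin m) →₀ k} (hb : bdry k m w = E) :
    ∃ w' : Finset (Fin m) →₀ k, w'.support ⊆ {τ} ∧ bdry k m w' = -E := by
  exact ⟨-w, by rw [Finsupp.support_neg]; exact hs, by rw [map_neg, hb]⟩

lemma tri_fill {a b c : Fin m} (hab : a ≠ b) (hbc : b ≠ c) (hac : a ≠ c) :
    ∃ w : Finset (Fin m) →₀ k, w.support ⊆ {({a, b, c} : Finset (Fin m))} ∧
      bdry k m w = edgeChain k a b + edgeChain k b c + edgeChain k c a := by
  have hset : ∀ u v w : Fin m, ({u, v, w} : Finset (Fin m)) = {a, b, c} →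
      (∃ w' : Finset (Fin m) →₀ k, w'.support ⊆ {({u, v, w} : Finset (Fin m))} ∧
        bdry k m w' = edgeChain k a b + edgeChain k b c + edgeChain k c a) →
      ∃ w' : Finset (Fin m) →₀ k, w'.support ⊆ {({a, b, c} : Finset (Fin m))} ∧
        bdry k m w' = edgeChain k a b + edgeChain k b c + edgeChain k c a := by
    intro u v w h hw
    rw [h] at hw
    exact hw
  rcases lt_trichotomy a b with h1 | h1 | h1
  · rcases lt_trichotomy b c with h2 | h2 | h2
    · exact tri_fill_sorted k h1 h2
    · exact absurd h2 hbc
    · rcases lt_trichotomy a c with h3 | h3 | h3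
      · -- a < c < b : sorted triple (a, c, b)
        obtain ⟨w, hs, hb⟩ := tri_fill_sorted k h3 h2
        refine hset a c b (by ext x; simp; tauto) ?_
        obtain ⟨w', hs', hb'⟩ := neg_fill k hs hb
        refine ⟨w', hs', ?_⟩
        rw [hb', edgeChain_comm k hac.symm, edgeChain_comm k hbc.symm,
          edgeChain_comm k hab.symm]
        abel
      · exact absurd h3 hac
      · -- c < a < b : sorted triple (c, a, b)
        obtain ⟨w, hs, hb⟩ := tri_fill_sorted k h3 h1
        refine hset c a b (by ext x; simp; tauto) ⟨w, hs, ?_⟩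
        rw [hb]
        abel
  · exact absurd h1 hab
  · rcases lt_trichotomy a c with h2 | h2 | h2
    · -- b < a < c : sorted (b, a, c)
      obtain ⟨w, hs, hb⟩ := tri_fill_sorted k h1 h2
      refine hset b a c (by ext x; simp; tauto) ?_
      obtain ⟨w', hs', hb'⟩ := neg_fill k hs hb
      refine ⟨w', hs', ?_⟩
      rw [hb', edgeChain_comm k hab.symm, edgeChain_comm k hbc.symm,
        edgeChain_comm k hac.symm]
      abel
    · exact absurd h2 hac
    · rcases lt_trichotomy b c with h3 | h3 | h3
      · -- b < c < a : sorted (b, c, a)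
        obtain ⟨w, hs, hb⟩ := tri_fill_sorted k h3 h2
        refine hset b c a (by ext x; simp; tauto) ⟨w, hs, ?_⟩
        rw [hb]
        abel
      · exact absurd h3 hbc
      · -- c < b < a : sorted (c, b, a)
        obtain ⟨w, hs, hb⟩ := tri_fill_sorted k h3 h1
        refine hset c b a (by ext x; simp; tauto) ?_
        obtain ⟨w', hs', hb'⟩ := neg_fill k hs hb
        refine ⟨w', hs', ?_⟩
        rw [hb', edgeChain_comm k hab.symm, edgeChain_comm k hbc.symm,
          edgeChain_comm k hac.symm]
        abel

end ChordalProof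

/-- A (flag) complex has chordal 1-skeleton if every simplicial cycle of length at
least 4 has a chord. -/
def IsChordal {m : ℕ} (K : SComplex m) : Prop :=
  ∀ c : List (Fin m), c.Nodup → ∀ h4 : 4 ≤ c.length,
    (∀ j : Fin c.length,
      ({c.get j, c.get ⟨(j.1 + 1) % c.length, Nat.mod_lt _ (by omega)⟩} :
        Finset (Fin m)) ∈ K.faces) →
    ∃ a b : Fin c.length,
      ({c.get a, c.get b} : Finset (Fin m)) ∈ K.faces ∧ a ≠ b ∧
        (a.1 + 1) % c.length ≠ b.1 ∧ (b.1 + 1) % c.length ≠ a.1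


section CircuitFill
variable (k : Type) [Field k] {m : ℕ} {K : SComplex m} {I : Set (Fin m)}

lemma getLast_eq_of_concat {α : Type} {L M : List α} {y : α} (h : L = M ++ [y])
    (hL : L ≠ []) : L.getLast hL = y := by
  subst h
  exact List.getLast_append _

lemma chain_verts : ∀ (L : List (Fin m)),
    List.Chain' (fun u v => ({u, v} : Finset (Fin m)) ∈ (K.full I).faces) L →
    ∀ w : Fin m, w ∈ L.dropLast → w ∈ I
  | [], _, w, hw => by simp at hw
  | [x], _, w, hw => by simp at hw
  | x :: y :: t, hc, w, hw => by
    obtain ⟨hxy, hrest⟩ := List.isChain_cons_cons.1 hc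
    rw [List.dropLast_cons₂] at hw
    rcases List.mem_cons.1 hw with rfl | hw
    · exact hxy.2 (by simp)
    · exact chain_verts (y :: t) hrest w hw

lemma circuit_fill (hflag : K.IsFlag) (hK : IsChordal K) :
    ∀ (N : ℕ) (a : Fin m) (l : List (Fin m)), (a :: l).length ≤ N →
    2 ≤ l.length → (a :: l).Nodup →
    List.Chain' (fun u v => ({u, v} : Finset (Fin m)) ∈ (K.full I).faces)
      ((a :: l) ++ [a]) →
    ∃ y : Finset (Fin m) →₀ k,
      (∀ σ ∈ y.support, σ ∈ (K.full I).faces ∧ σ.card = 3) ∧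
      bdry k m y = cycChain k a l := by
  intro N
  induction N with
  | zero => intro a l hlen; simp at hlen
  | succ N IH =>
    intro a l hlen hl2 hnd hch
    by_cases hsmall : l.length = 2
    · -- base case : triangle
      rcases l with _ | ⟨b, l⟩
      · simp at hl2
      rcases l with _ | ⟨c0, l⟩
      · simp at hl2
      rcases l with _ | ⟨d, l⟩
      swap
      · simp at hsmall
      have h' : List.Chain'
          (fun u v => ({u, v} : Finset (Fin m)) ∈ (K.full I).faces) [a, b, c0, a] := by
        simpa using hch
      have h1 : ({a, b} : Finset (Fin m)) ∈ (K.full I).faces :=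
        (List.isChain_cons_cons.1 h').1
      have h'' := (List.isChain_cons_cons.1 h').2
      have h2 : ({b, c0} : Finset (Fin m)) ∈ (K.full I).faces :=
        (List.isChain_cons_cons.1 h'').1
      have h3 : ({c0, a} : Finset (Fin m)) ∈ (K.full I).faces :=
        (List.isChain_cons_cons.1 (List.isChain_cons_cons.1 h'').2).1
      have hab : a ≠ b := by intro h; simp [h] at hnd
      have hac : a ≠ c0 := by intro h; simp [h] at hnd
      have hbc : b ≠ c0 := by intro h; simp [h] at hnd
      have hfab : ({a, b} : Finset (Fin m)) ∈ K.faces := h1.1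
      have hfbc : ({b, c0} : Finset (Fin m)) ∈ K.faces := h2.1
      have hfca : ({c0, a} : Finset (Fin m)) ∈ K.faces := h3.1
      have hsa : ({a} : Finset (Fin m)) ∈ K.faces :=
        K.down_closed hfab (by simp)
      have hsb : ({b} : Finset (Fin m)) ∈ K.faces :=
        K.down_closed hfab (by simp)
      have hsc : ({c0} : Finset (Fin m)) ∈ K.faces :=
        K.down_closed hfca (by simp)
      have htriK : ({a, b, c0} : Finset (Fin m)) ∈ K.faces := by
        apply hflag
        · intro i hi
          rcases (by simpa using hi : i = a ∨ i = b ∨ i = c0) with rfl | rfl | rfl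
          · exact hsa
          · exact hsb
          · exact hsc
        · have hall : ∀ x y : Fin m, (x = a ∨ x = b ∨ x = c0) →
              (y = a ∨ y = b ∨ y = c0) → x ≠ y →
              ({x, y} : Finset (Fin m)) ∈ K.faces := by
            rintro x y (rfl | rfl | rfl) (rfl | rfl | rfl) hxy <;>
              first
                | exact absurd rfl hxy
                | exact hfab
                | exact hfbc
                | exact hfca
                | (rw [Finset.pair_comm]; first | exact hfab | exact hfbc | exact hfca)
          intro i hi j hj hij
          exact hall i j (by simpa using hi) (by simpa using hj) hij
      have hsubI : ↑({a, b, c0} : Finset (Fin m)) ⊆ I := by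
        intro x hx
        rcases (by simpa using hx : x = a ∨ x = b ∨ x = c0) with rfl | rfl | rfl
        · exact h1.2 (by simp)
        · exact h1.2 (by simp)
        · exact h2.2 (by simp)
      have hcard : ({a, b, c0} : Finset (Fin m)).card = 3 := by
        rw [Finset.card_insert_of_notMem (by simp [hab, hac]),
          Finset.card_insert_of_notMem (by simp [hbc]), Finset.card_singleton]
      obtain ⟨w, hws, hwb⟩ := tri_fill k hab hbc hac
      refine ⟨w, ?_, ?_⟩
      · intro σ hσ
        have := hws hσ
        rw [Finset.mem_singleton] at this
        subst this
        exact ⟨⟨htriK, hsubI⟩, hcard⟩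
      · rw [hwb]
        have : cycChain k a [b, c0] =
            edgeChain k a b + (edgeChain k b c0 + (edgeChain k c0 a + 0)) := rfl
        rw [this]
        abel
    · -- inductive case
      have hl3 : 3 ≤ l.length := by omega
      have hn4 : 4 ≤ (a :: l).length := by simp; omega
      have hchK : List.Chain' (fun u v => ({u, v} : Finset (Fin m)) ∈ K.faces)
          ((a :: l) ++ [a]) := hch.imp (fun _ _ h => h.1)
      have hfin := (closed_chain_iff_fin
        (fun u v => ({u, v} : Finset (Fin m)) ∈ K.faces) a l).1 hchK
      obtain ⟨j1, j2, hface, hjne, hmj1, hmj2⟩ := hK (a :: l) hnd hn4 hfin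
      -- order the chord positions
      obtain ⟨pf, qf, hpq, hfpq, hm1, hm2⟩ :
          ∃ pf qf : Fin (a :: l).length, pf.1 < qf.1 ∧
            ({(a :: l).get pf, (a :: l).get qf} : Finset (Fin m)) ∈ K.faces ∧
            (pf.1 + 1) % (a :: l).length ≠ qf.1 ∧
            (qf.1 + 1) % (a :: l).length ≠ pf.1 := by
        rcases hjne.lt_or_gt with h | h
        · exact ⟨j1, j2, Fin.lt_def.1 h, hface, hmj1, hmj2⟩
        · exact ⟨j2, j1, Fin.lt_def.1 h, by rwa [Finset.pair_comm], hmj2, hmj1⟩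
      have hclen : (a :: l).length = l.length + 1 := rfl
      obtain ⟨p, hpn⟩ := pf
      obtain ⟨q, hqn⟩ := qf
      simp only [Fin.val_mk] at hpq hm1 hm2
      set u := (a :: l).get ⟨p, hpn⟩ with hudef
      set v := (a :: l).get ⟨q, hqn⟩ with hvdef
      have huv : u ≠ v := by
        intro h
        have := (List.Nodup.get_inj_iff hnd).1 h
        rw [Fin.mk.injEq] at this
        omega
      have hp1n : p + 1 < (a :: l).length := by omega
      have hq2 : p + 2 ≤ q := by
        rw [Nat.mod_eq_of_lt hp1n] at hm1
        omega
      have hcase : p ≠ 0 ∨ q + 2 ≤ (a :: l).length := by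
        by_cases hq1 : q + 1 = (a :: l).length
        · left
          intro hp0
          rw [hq1, Nat.mod_self] at hm2
          exact hm2 hp0.symm
        · right; omega
      set P := (a :: l).take p with hPdef
      set Q := ((a :: l).drop (p + 1)).take (q - (p + 1)) with hQdef
      set Rr := (a :: l).drop (q + 1) with hRdef
      have hdrop_p : (a :: l).drop p = u :: (a :: l).drop (p + 1) := by
        rw [List.drop_eq_getElem_cons hpn]
        rfl
      have hdrop_q : (a :: l).drop q = v :: Rr := by
        rw [List.drop_eq_getElem_cons hqn]
        rfl
      have hdrop_pq : (a :: l).drop (p + 1) = Q ++ v :: Rr := by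
        conv_lhs => rw [← List.take_append_drop (q - (p + 1)) ((a :: l).drop (p + 1))]
        rw [List.drop_drop]
        first
          | rw [show q - (p + 1) + (p + 1) = q from by omega, hdrop_q]
          | rw [show p + 1 + (q - (p + 1)) = q from by omega, hdrop_q]
      have hdecomp : (a :: l) = P ++ u :: (Q ++ v :: Rr) := by
        conv_lhs => rw [← List.take_append_drop p (a :: l)]
        rw [hdrop_p, hdrop_pq]
      have hPlen : P.length = p := by
        rw [hPdef, List.length_take]
        omega
      have hQlen : Q.length = q - (p + 1) := by
        rw [hQdef, List.length_take, List.length_drop]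
        omega
      have hRlen : Rr.length = (a :: l).length - (q + 1) := by
        rw [hRdef, List.length_drop]
      have htake_q : (a :: l).take q = P ++ u :: Q := by
        have hdecomp' : (a :: l) = (P ++ u :: Q) ++ (v :: Rr) := by
          rw [hdecomp]; simp
        rw [hdecomp', List.take_left' (show (P ++ u :: Q).length = q by
          simp only [List.length_append, List.length_cons, hPlen, hQlen]; omega)]
      have hch' : List.Chain' (fun u v => ({u, v} : Finset (Fin m)) ∈ (K.full I).faces)
          ((a :: l) ++ (a :: l).take 1) := hch
      have vertsI : ∀ w ∈ (a :: l), w ∈ I := by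
        intro w hw
        refine chain_verts ((a :: l) ++ [a]) hch w ?_
        have hdl : ((a :: l) ++ [a]).dropLast = (a :: l) := List.dropLast_concat
        rw [hdl]
        exact hw
      have huI : u ∈ I := vertsI u (List.get_mem (a :: l) ⟨p, hpn⟩)
      have hvI : v ∈ I := vertsI v (List.get_mem (a :: l) ⟨q, hqn⟩)
      have hchordI : ({u, v} : Finset (Fin m)) ∈ (K.full I).faces := by
        refine ⟨hfpq, ?_⟩
        intro x hx
        rcases (by simpa using hx : x = u ∨ x = v) with rfl | rfl
        · exact huI
        · exact hvI
      have hchordI' : ({v, u} : Finset (Fin m)) ∈ (K.full I).faces := by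
        rwa [Finset.pair_comm]
      -- circuit 1
      have hrot_p : (a :: l).rotate p = (u :: (Q ++ v :: Rr)) ++ P := by
        rw [List.rotate_eq_drop_append_take (by omega), hdrop_p, hdrop_pq]
      have chain_p := closed_chain_rotate _ (a :: l) hch' p
      rw [hrot_p] at chain_p
      have chain1pre : List.Chain'
          (fun u v => ({u, v} : Finset (Fin m)) ∈ (K.full I).faces)
          (u :: (Q ++ [v])) := by
        refine chain_p.prefix ⟨(Rr ++ P) ++ [u], ?_⟩
        simp
      have chain1 : List.Chain'
          (fun u v => ({u, v} : Finset (Fin m)) ∈ (K.full I).faces)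
          ((u :: (Q ++ [v])) ++ [u]) := by
        rw [chain'_concat_iff _ _ (by simp) u]
        refine ⟨chain1pre, ?_⟩
        rw [getLast_eq_of_concat (M := u :: Q) (y := v) (by simp)]
        exact hchordI'
      have nodup1 : (u :: (Q ++ [v])).Nodup := by
        refine hnd.sublist ?_
        have s1 : (u :: (Q ++ [v])).Sublist (u :: (Q ++ v :: Rr)) := by
          refine List.Sublist.cons₂ u ?_
          refine List.Sublist.append_left ?_ Q
          exact List.Sublist.cons₂ v (List.nil_sublist _)
        have s2 : (u :: (Q ++ v :: Rr)).Sublist (a :: l) := by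
          rw [hdecomp]
          exact List.sublist_append_right _ _
        exact s1.trans s2
      have hlen' : l.length + 1 ≤ N + 1 := by simpa using hlen
      have hqn' : q < l.length + 1 := by simpa using hqn
      have hpn' : p < l.length + 1 := by simpa using hpn
      have hcase' : p ≠ 0 ∨ q + 2 ≤ l.length + 1 := by
        rcases hcase with h | h
        · exact Or.inl h
        · right; rw [hclen] at h; exact h
      have len1 : (u :: (Q ++ [v])).length ≤ N := by
        have e : (u :: (Q ++ [v])).length = (q - (p + 1)) + 2 := by
          simp only [List.length_nil, List.length_cons, List.length_append,
            List.length_singleton, hQlen]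
        rw [e]
        rcases hcase' with h | h <;> omega
      have hl2_1 : 2 ≤ (Q ++ [v]).length := by
        have e : (Q ++ [v]).length = (q - (p + 1)) + 1 := by
          simp only [List.length_nil, List.length_cons, List.length_append,
            List.length_singleton, hQlen]
        rw [e]; omega
      obtain ⟨y1, hy1s, hy1b⟩ := IH u (Q ++ [v]) len1 hl2_1 nodup1 chain1
      -- circuit 2
      have hrot_q : (a :: l).rotate q = (v :: Rr) ++ (P ++ u :: Q) := by
        rw [List.rotate_eq_drop_append_take (by omega), hdrop_q, htake_q]
      have chain_q := closed_chain_rotate _ (a :: l) hch' q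
      rw [hrot_q] at chain_q
      have chain2pre : List.Chain'
          (fun u v => ({u, v} : Finset (Fin m)) ∈ (K.full I).faces)
          (v :: (Rr ++ P ++ [u])) := by
        refine chain_q.prefix ⟨Q ++ [v], ?_⟩
        simp
      have chain2 : List.Chain'
          (fun u v => ({u, v} : Finset (Fin m)) ∈ (K.full I).faces)
          ((v :: (Rr ++ P ++ [u])) ++ [v]) := by
        rw [chain'_concat_iff _ _ (by simp) v]
        refine ⟨chain2pre, ?_⟩
        rw [getLast_eq_of_concat (M := v :: (Rr ++ P)) (y := u) (by simp)]
        exact hchordI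
      have nodup2 : (v :: (Rr ++ P ++ [u])).Nodup := by
        have hsub : (P ++ u :: v :: Rr).Sublist (a :: l) := by
          rw [hdecomp]
          refine List.Sublist.append_left ?_ P
          refine List.Sublist.cons₂ u ?_
          exact List.sublist_append_right _ _
        have hnd2' : (P ++ u :: v :: Rr).Nodup := hnd.sublist hsub
        have hperm : (v :: (Rr ++ P ++ [u])).Perm (P ++ u :: v :: Rr) := by
          have h1 : v :: (Rr ++ P ++ [u]) = ([v] ++ Rr) ++ (P ++ [u]) := by simp
          have h2 : (P ++ [u]) ++ ([v] ++ Rr) = P ++ u :: v :: Rr := by simp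
          rw [h1, ← h2]
          exact List.perm_append_comm
        exact (List.Perm.nodup_iff hperm).2 hnd2'
      have len2 : (v :: (Rr ++ P ++ [u])).length ≤ N := by
        have e : (v :: (Rr ++ P ++ [u])).length =
            ((a :: l).length - (q + 1)) + p + 2 := by
          simp only [List.length_nil, List.length_cons, List.length_append,
            List.length_singleton, hPlen, hRlen]
        rw [e, hclen]
        omega
      have hl2_2 : 2 ≤ (Rr ++ P ++ [u]).length := by
        have e : (Rr ++ P ++ [u]).length = ((a :: l).length - (q + 1)) + p + 1 := by
          simp only [List.length_nil, List.length_cons, List.length_append,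
            List.length_singleton, hPlen, hRlen]
        rw [e, hclen]
        rcases hcase' with h | h <;> omega
      obtain ⟨y2, hy2s, hy2b⟩ := IH v (Rr ++ P ++ [u]) len2 hl2_2 nodup2 chain2
      refine ⟨y1 + y2, ?_, ?_⟩
      · intro σ hσ
        rcases Finset.mem_union.1 (Finsupp.support_add hσ) with h | h
        · exact hy1s σ h
        · exact hy2s σ h
      · rw [map_add, hy1b, hy2b]
        have hgoal : cycChain k a l = pathChain k ((a :: l) ++ [a]) := rfl
        rw [hgoal]
        have e_cyc1 : cycChain k u (Q ++ [v]) =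
            pathChain k ((u :: Q) ++ [v]) + edgeChain k v u := by
          rw [cycChain]
          have h0 : (u :: (Q ++ [v])) ++ [u] = (u :: Q) ++ v :: [u] := by simp
          rw [h0, pathChain_split]
          have h1 : pathChain k (v :: [u]) = edgeChain k v u := by
            simp [pathChain]
          rw [h1]
        have e_t1 : pathChain k ((a :: l) ++ [a]) = pathChain k (P ++ [u]) +
            pathChain k (u :: (Q ++ v :: (Rr ++ [a]))) := by
          have h0 : (a :: l) ++ [a] = P ++ u :: (Q ++ v :: (Rr ++ [a])) := by
            rw [hdecomp]; simp
          rw [h0, pathChain_split]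
        have e_t2 : pathChain k (u :: (Q ++ v :: (Rr ++ [a]))) =
            pathChain k ((u :: Q) ++ [v]) + pathChain k (v :: (Rr ++ [a])) := by
          have h0 : u :: (Q ++ v :: (Rr ++ [a])) = (u :: Q) ++ v :: (Rr ++ [a]) := by
            simp
          rw [h0, pathChain_split]
        rw [e_cyc1, e_t1, e_t2]
        by_cases hp0 : p = 0
        · -- u = a, P = []
          have hPnil : P = [] := by rw [hPdef, hp0]; rfl
          have hua : u = a := by
            rw [hudef]
            subst hp0
            rfl
          have e_cyc2 : cycChain k v (Rr ++ P ++ [u]) =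
              pathChain k ((v :: Rr) ++ [u]) + edgeChain k u v := by
            rw [cycChain]
            have h0 : (v :: (Rr ++ P ++ [u])) ++ [v] = (v :: Rr) ++ u :: [v] := by
              rw [hPnil]; simp
            rw [h0, pathChain_split]
            have h1 : pathChain k (u :: [v]) = edgeChain k u v := by
              simp [pathChain]
            rw [h1]
          rw [e_cyc2, hPnil]
          have h2 : pathChain k (([] : List (Fin m)) ++ [u]) = 0 := by simp
          have h3 : pathChain k ((v :: Rr) ++ [u]) =
              pathChain k (v :: (Rr ++ [a])) := by
            rw [hua]; simp
          rw [h2, h3, edgeChain_comm k huv]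
          abel
        · -- P = a :: P'
          obtain ⟨P', hP'⟩ : ∃ P', P = a :: P' := by
            rcases hPX : P with _ | ⟨a', P''⟩
            · exfalso
              rw [hPX] at hPlen
              simp at hPlen
              omega
            · have hinj : (a :: l) = a' :: (P'' ++ u :: (Q ++ v :: Rr)) := by
                rw [hdecomp, hPX]; rfl
              injection hinj with h1 h2
              subst h1
              exact ⟨P'', rfl⟩
          have e_cyc2 : cycChain k v (Rr ++ P ++ [u]) =
              pathChain k ((v :: Rr) ++ [a]) +
                (pathChain k ((a :: P') ++ [u]) + edgeChain k u v) := by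
            rw [cycChain]
            have h0 : (v :: (Rr ++ P ++ [u])) ++ [v] =
                (v :: Rr) ++ a :: (P' ++ u :: [v]) := by
              rw [hP']; simp
            rw [h0, pathChain_split]
            have h1 : a :: (P' ++ u :: [v]) = (a :: P') ++ u :: [v] := by simp
            have hsplit2 : pathChain k ((a :: P') ++ u :: [v]) =
                pathChain k ((a :: P') ++ [u]) + pathChain k (u :: [v]) :=
              pathChain_split k (a :: P') u [v]
            have h2 : pathChain k (u :: [v]) = edgeChain k u v := by
              simp [pathChain]
            rw [h1, hsplit2, h2]
          rw [e_cyc2, hP']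
          have h3 : pathChain k (v :: (Rr ++ [a])) =
              pathChain k ((v :: Rr) ++ [a]) := by simp
          rw [h3, edgeChain_comm k huv]
          abel

end CircuitFill


section MainProof
variable (k : Type) [Field k] {m : ℕ} {K : SComplex m} {I : Set (Fin m)}

lemma bdryChain_pair_apply {A B : Fin m} (h : A < B) (v : Fin m) :
    bdryChain k ({A, B} : Finset (Fin m)) ({v} : Finset (Fin m)) =
      (if B = v then (1 : k) else 0) - (if A = v then 1 else 0) := by
  rw [bdryChain_pair k h, Finsupp.sub_apply]
  simp [Finsupp.single_apply, Finset.singleton_inj]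

lemma bdryChain_pair_apply_not_mem {σ : Finset (Fin m)} (h2 : σ.card = 2) {v : Fin m}
    (hv : v ∉ σ) : bdryChain k σ ({v} : Finset (Fin m)) = 0 := by
  obtain ⟨A, B, hAB, rfl⟩ := Finset.card_eq_two.1 h2
  have hA : A ≠ v := fun h => hv (by simp [h])
  have hB : B ≠ v := fun h => hv (by simp [h])
  rcases hAB.lt_or_gt with h | h
  · rw [bdryChain_pair_apply k h v, if_neg hB, if_neg hA, sub_zero]
  · rw [Finset.pair_comm, bdryChain_pair_apply k h v, if_neg hA, if_neg hB, sub_zero]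

lemma bdryChain_pair_apply_mem {σ : Finset (Fin m)} (h2 : σ.card = 2) {v : Fin m}
    (hv : v ∈ σ) : bdryChain k σ ({v} : Finset (Fin m)) ≠ 0 := by
  obtain ⟨A, B, hAB, rfl⟩ := Finset.card_eq_two.1 h2
  have hcases : v = A ∨ v = B := by simpa using hv
  have hgen : ∀ A' B' : Fin m, A' < B' → (v = A' ∨ v = B') →
      bdryChain k ({A', B'} : Finset (Fin m)) ({v} : Finset (Fin m)) ≠ 0 := by
    intro A' B' hlt hc
    rw [bdryChain_pair_apply k hlt v]
    rcases hc with rfl | rfl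
    · simp [hlt.ne, hlt.ne']
    · simp [hlt.ne, hlt.ne']
  rcases hAB.lt_or_gt with h | h
  · exact hgen A B h hcases
  · rw [Finset.pair_comm]
    exact hgen B A h (hcases.symm)

lemma exists_second_edge (x : Finset (Fin m) →₀ k) (hb : bdry k m x = 0)
    (hcard : ∀ σ ∈ x.support, σ.card = 2) {σ0 : Finset (Fin m)}
    (hσ0 : σ0 ∈ x.support) {v : Fin m} (hv : v ∈ σ0) :
    ∃ τ ∈ x.support, τ ≠ σ0 ∧ v ∈ τ := by
  by_contra hno
  push_neg at hno
  have happ : (bdry k m x) ({v} : Finset (Fin m)) = 0 := by rw [hb]; rfl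
  rw [bdry_eq_sum, Finsupp.sum_apply] at happ
  rw [Finsupp.sum] at happ
  rw [Finset.sum_eq_single_of_mem σ0 hσ0] at happ
  · rw [Finsupp.smul_apply, smul_eq_mul] at happ
    rcases mul_eq_zero.1 happ with h | h
    · exact (Finsupp.mem_support_iff.1 hσ0) h
    · exact bdryChain_pair_apply_mem k (hcard σ0 hσ0) hv h
  · intro τ hτ hne
    rw [Finsupp.smul_apply, smul_eq_mul]
    have hvτ : v ∉ τ := hno τ hτ hne
    rw [bdryChain_pair_apply_not_mem k (hcard τ hτ) hvτ, mul_zero]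

lemma cycle_of_revisit (x : Finset (Fin m) →₀ k) (v0 v1 w : Fin m)
    (p₁ p₂ : List (Fin m))
    (hnd : (v0 :: v1 :: (p₁ ++ w :: p₂)).Nodup)
    (hch : List.Chain' (fun u w => ({u, w} : Finset (Fin m)) ∈ x.support)
      (v0 :: v1 :: (p₁ ++ w :: p₂)))
    (hRwv0 : ({w, v0} : Finset (Fin m)) ∈ x.support) :
    ∃ (a b : Fin m) (l' : List (Fin m)), (a :: b :: l').Nodup ∧ l' ≠ [] ∧
      List.Chain' (fun u w => ({u, w} : Finset (Fin m)) ∈ x.support)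
        ((a :: b :: l') ++ [a]) := by
  refine ⟨v0, v1, p₁ ++ [w], ?_, by simp, ?_⟩
  · refine hnd.sublist ?_
    refine List.Sublist.cons₂ v0 (List.Sublist.cons₂ v1 ?_)
    refine List.Sublist.append_left ?_ p₁
    exact List.Sublist.cons₂ w (List.nil_sublist _)
  · rw [chain'_concat_iff _ _ (by simp) v0]
    constructor
    · refine hch.prefix ⟨p₂, ?_⟩
      simp
    · rw [getLast_eq_of_concat (M := v0 :: v1 :: p₁) (y := w) (by simp)]
      exact hRwv0

lemma grow (x : Finset (Fin m) →₀ k) (hb : bdry k m x = 0)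
    (hcard : ∀ σ ∈ x.support, σ.card = 2) :
    ∀ (fuel : ℕ) (v0 : Fin m) (p : List (Fin m)), (v0 :: p).Nodup → 1 ≤ p.length →
    m ≤ fuel + (v0 :: p).length →
    List.Chain' (fun u w => ({u, w} : Finset (Fin m)) ∈ x.support) (v0 :: p) →
    ∃ (a b : Fin m) (l' : List (Fin m)), (a :: b :: l').Nodup ∧ l' ≠ [] ∧
      List.Chain' (fun u w => ({u, w} : Finset (Fin m)) ∈ x.support)
        ((a :: b :: l') ++ [a]) := by
  intro fuel
  induction fuel with
  | zero =>
    intro v0 p hnd hp hm hch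
    rcases p with _ | ⟨v1, p'⟩
    · simp at hp
    have hσ0 : ({v0, v1} : Finset (Fin m)) ∈ x.support := (List.isChain_cons_cons.1 hch).1
    obtain ⟨τ, hτ, hτne, hτv⟩ := exists_second_edge k x hb hcard hσ0 (v := v0) (by simp)
    obtain ⟨A, B, hAB, hABeq⟩ := Finset.card_eq_two.1 (hcard τ hτ)
    obtain ⟨w, hwv0, hτw⟩ : ∃ w, w ≠ v0 ∧ τ = {v0, w} := by
      subst hABeq
      rcases (by simpa using hτv : v0 = A ∨ v0 = B) with rfl | rfl
      · exact ⟨B, fun h => hAB h.symm, rfl⟩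
      · exact ⟨A, fun h => hAB h, Finset.pair_comm A v0⟩
    have hwv1 : w ≠ v1 := by
      rintro rfl
      exact hτne (by rw [hτw])
    have hRwv0 : ({w, v0} : Finset (Fin m)) ∈ x.support := by
      rw [Finset.pair_comm, ← hτw]
      exact hτ
    by_cases hwp : w ∈ v0 :: v1 :: p'
    · rcases (by simpa [hwv0] using hwp : w = v1 ∨ w ∈ p') with rfl | hwp'
      · exact absurd rfl hwv1
      obtain ⟨p₁, p₂, rfl⟩ := List.append_of_mem hwp'
      exact cycle_of_revisit k x v0 v1 w p₁ p₂ hnd hch hRwv0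
    · exfalso
      have hnd' : (w :: v0 :: v1 :: p').Nodup := List.nodup_cons.2 ⟨hwp, hnd⟩
      have hle : (w :: v0 :: v1 :: p').length ≤ m := by
        have := hnd'.length_le_card
        simpa using this
      simp at hle hm
      omega
  | succ n IHf =>
    intro v0 p hnd hp hm hch
    rcases p with _ | ⟨v1, p'⟩
    · simp at hp
    have hσ0 : ({v0, v1} : Finset (Fin m)) ∈ x.support := (List.isChain_cons_cons.1 hch).1
    obtain ⟨τ, hτ, hτne, hτv⟩ := exists_second_edge k x hb hcard hσ0 (v := v0) (by simp)
    obtain ⟨A, B, hAB, hABeq⟩ := Finset.card_eq_two.1 (hcard τ hτ)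
    obtain ⟨w, hwv0, hτw⟩ : ∃ w, w ≠ v0 ∧ τ = {v0, w} := by
      subst hABeq
      rcases (by simpa using hτv : v0 = A ∨ v0 = B) with rfl | rfl
      · exact ⟨B, fun h => hAB h.symm, rfl⟩
      · exact ⟨A, fun h => hAB h, Finset.pair_comm A v0⟩
    have hwv1 : w ≠ v1 := by
      rintro rfl
      exact hτne (by rw [hτw])
    have hRwv0 : ({w, v0} : Finset (Fin m)) ∈ x.support := by
      rw [Finset.pair_comm, ← hτw]
      exact hτ
    by_cases hwp : w ∈ v0 :: v1 :: p'
    · rcases (by simpa [hwv0] using hwp : w = v1 ∨ w ∈ p') with rfl | hwp'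
      · exact absurd rfl hwv1
      obtain ⟨p₁, p₂, rfl⟩ := List.append_of_mem hwp'
      exact cycle_of_revisit k x v0 v1 w p₁ p₂ hnd hch hRwv0
    · refine IHf w (v0 :: v1 :: p') (List.nodup_cons.2 ⟨hwp, hnd⟩) (by simp) ?_
        (List.isChain_cons_cons.2 ⟨hRwv0, hch⟩)
      simp at hm ⊢
      omega

lemma exists_cycle (x : Finset (Fin m) →₀ k) (hb : bdry k m x = 0)
    (hcard : ∀ σ ∈ x.support, σ.card = 2) (hx : x ≠ 0) :
    ∃ (a b : Fin m) (l' : List (Fin m)), (a :: b :: l').Nodup ∧ l' ≠ [] ∧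
      List.Chain' (fun u w => ({u, w} : Finset (Fin m)) ∈ x.support)
        ((a :: b :: l') ++ [a]) := by
  obtain ⟨σ0, hσ0⟩ := Finsupp.support_nonempty_iff.2 hx
  obtain ⟨A, B, hAB, rfl⟩ := Finset.card_eq_two.1 (hcard σ0 hσ0)
  refine grow k x hb hcard m A [B] (by simp [hAB]) (by simp) (by simp) ?_
  exact List.isChain_cons_cons.2 ⟨hσ0, List.isChain_singleton _⟩

lemma forward_main (hflag : K.IsFlag) (hK : IsChordal K) :
    ∀ (n : ℕ) (x : Finset (Fin m) →₀ k), x.support.card ≤ n →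
    (∀ σ ∈ x.support, σ ∈ (K.full I).faces ∧ σ.card = 2) → bdry k m x = 0 →
    ∃ y : Finset (Fin m) →₀ k,
      (∀ σ ∈ y.support, σ ∈ (K.full I).faces ∧ σ.card = 3) ∧ bdry k m y = x := by
  intro n
  induction n with
  | zero =>
    intro x hcard hcond hb
    have hx0 : x = 0 := by
      rw [← Finsupp.support_eq_empty]
      exact Finset.card_eq_zero.1 (le_antisymm hcard zero_le)
    exact ⟨0, by simp, by rw [map_zero, hx0]⟩
  | succ n IHn =>
    intro x hcard hcond hb
    by_cases hx : x = 0
    · exact ⟨0, by simp, by rw [map_zero, hx]⟩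
    obtain ⟨a, b, l', hnd, hl', hch⟩ :=
      exists_cycle k x hb (fun σ h => (hcond σ h).2) hx
    set z := cycChain k a (b :: l') with hzdef
    have hzsupp : ∀ σ ∈ z.support, σ ∈ x.support := by
      intro σ hσ
      obtain ⟨u, v, rfl, hinf⟩ := support_cycChain k a (b :: l') σ hσ
      exact pair_infix_chain hch hinf
    have hchfull : List.Chain'
        (fun u v => ({u, v} : Finset (Fin m)) ∈ (K.full I).faces)
        ((a :: b :: l') ++ [a]) :=
      hch.imp (fun u v h => (hcond _ h).1)
    have hbl : 2 ≤ (b :: l').length := by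
      have : 1 ≤ l'.length := List.length_pos_iff.2 hl'
      simp
      omega
    obtain ⟨y1, hy1s, hy1b⟩ := circuit_fill k hflag hK (a :: b :: l').length a
      (b :: l') le_rfl hbl hnd hchfull
    have hzb : bdry k m z = 0 := bdry_cycChain k a (b :: l') hnd (by simp)
    have hσ0x : ({a, b} : Finset (Fin m)) ∈ x.support := (List.isChain_cons_cons.1 hch).1
    have hz0 : z ({a, b} : Finset (Fin m)) ≠ 0 := cycChain_coef k a b l' hnd hl'
    set t := x ({a, b} : Finset (Fin m)) / z ({a, b} : Finset (Fin m)) with htdef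
    set x' := x - t • z with hx'def
    have hx'σ0 : x' ({a, b} : Finset (Fin m)) = 0 := by
      rw [hx'def, Finsupp.sub_apply, Finsupp.smul_apply, smul_eq_mul, htdef,
        div_mul_cancel₀ _ hz0, sub_self]
    have hx'supp : x'.support ⊆ x.support.erase ({a, b} : Finset (Fin m)) := by
      intro σ hσ
      rw [Finset.mem_erase]
      constructor
      · intro h
        rw [h] at hσ
        exact (Finsupp.mem_support_iff.1 hσ) hx'σ0
      · by_contra hns
        have hx0 : x σ = 0 := Finsupp.notMem_support_iff.1 hns
        have hz0' : z σ = 0 := by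
          by_contra h
          exact hns (hzsupp σ (Finsupp.mem_support_iff.2 h))
        apply Finsupp.mem_support_iff.1 hσ
        rw [hx'def, Finsupp.sub_apply, Finsupp.smul_apply, smul_eq_mul, hx0, hz0',
          mul_zero, sub_zero]
    have hx'card : x'.support.card ≤ n := by
      have h1 := Finset.card_le_card hx'supp
      have h2 : (x.support.erase ({a, b} : Finset (Fin m))).card =
          x.support.card - 1 := Finset.card_erase_of_mem hσ0x
      have h3 : 1 ≤ x.support.card := Finset.card_pos.2 ⟨_, hσ0x⟩
      omega
    have hx'cond : ∀ σ ∈ x'.support, σ ∈ (K.full I).faces ∧ σ.card = 2 := by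
      intro σ hσ
      exact hcond σ (Finset.mem_of_mem_erase (hx'supp hσ))
    have hx'b : bdry k m x' = 0 := by
      rw [hx'def, map_sub, map_smul, hb, hzb, smul_zero, sub_zero]
    obtain ⟨y2, hy2s, hy2b⟩ := IHn x' hx'card hx'cond hx'b
    refine ⟨y2 + t • y1, ?_, ?_⟩
    · intro σ hσ
      rcases Finset.mem_union.1 (Finsupp.support_add hσ) with h | h
      · exact hy2s σ h
      · exact hy1s σ (Finsupp.support_smul h)
    · rw [map_add, map_smul, hy2b, hy1b, hx'def]
      abel


lemma no_tri (n i j t : ℕ) (hn : 4 ≤ n) (hi : i < n) (hj : j < n) (ht : t < n)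
    (hij : i ≠ j) (hjt : j ≠ t) (hit : i ≠ t)
    (aij : (i + 1) % n = j ∨ (j + 1) % n = i)
    (ajt : (j + 1) % n = t ∨ (t + 1) % n = j)
    (ait : (i + 1) % n = t ∨ (t + 1) % n = i) : False := by
  have key : ∀ p q : ℕ, p < n → (p + 1) % n = q → q = p + 1 ∨ (p + 1 = n ∧ q = 0) := by
    intro p q hp h
    rcases Nat.lt_or_ge (p + 1) n with h' | h'
    · left
      rw [Nat.mod_eq_of_lt h'] at h
      omega
    · right
      have hpn : p + 1 = n := by omega
      rw [hpn, Nat.mod_self] at h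
      exact ⟨hpn, h.symm⟩
  have A1 := aij.imp (key i j hi) (key j i hj)
  have A2 := ajt.imp (key j t hj) (key t j ht)
  have A3 := ait.imp (key i t hi) (key t i ht)
  omega


end MainProof

/-- The 1-skeleton of a flag complex `K` is chordal if and only if
`H₁(K_I; k) = 0` for every full subcomplex `K_I` of `K`, i.e. every 1-cycle supported
on `K_I` is the boundary of a 2-chain supported on `K_I`. -/
theorem chordal_iff_H1_vanishes {m : ℕ} (k : Type) [Field k]
    (K : SComplex m) (hflag : K.IsFlag) :
    IsChordal K ↔
      ∀ (I : Set (Fin m)) (x : Finset (Fin m) →₀ k),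
        (∀ σ ∈ x.support, σ ∈ (K.full I).faces ∧ σ.card = 2) →
        bdry k m x = 0 →
        ∃ y : Finset (Fin m) →₀ k,
          (∀ σ ∈ y.support, σ ∈ (K.full I).faces ∧ σ.card = 3) ∧ bdry k m y = x := by
  constructor
  · intro hK I x hcond hb
    exact forward_main k hflag hK x.support.card x le_rfl hcond hb
  · intro hH c hnd h4 hedge
    by_contra hch
    rcases c with _ | ⟨a, c⟩
    · simp at h4
    rcases c with _ | ⟨b, c⟩
    · simp at h4
    rcases c with _ | ⟨w0, c⟩
    · simp at h4
    have hKch : List.Chain' (fun u v => ({u, v} : Finset (Fin m)) ∈ K.faces)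
        ((a :: (b :: w0 :: c)) ++ [a]) :=
      (closed_chain_iff_fin _ a (b :: w0 :: c)).2 hedge
    have hnech : List.Chain' (· ≠ ·) ((a :: (b :: w0 :: c)) ++ [a]) :=
      closed_ne_chain a (b :: w0 :: c) hnd (by simp)
    set I : Set (Fin m) := {v | v ∈ (a :: b :: w0 :: c)} with hIdef
    have hmemI : ∀ w ∈ (a :: b :: w0 :: c) ++ [a], w ∈ I := by
      intro w hw
      rcases List.mem_append.1 hw with h | h
      · exact h
      · have : w = a := by simpa using h
        rw [this]
        exact List.mem_cons_self
    have hchand : List.Chain'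
        (fun u v => ({u, v} : Finset (Fin m)) ∈ (K.full I).faces ∧ u ≠ v)
        ((a :: (b :: w0 :: c)) ++ [a]) := by
      refine chain'_imp_mem ?_ (chain'_and hKch hnech)
      intro u v hu hv h
      refine ⟨⟨h.1, ?_⟩, h.2⟩
      intro xx hxx
      rcases (by simpa using hxx : xx = u ∨ xx = v) with rfl | rfl
      · exact hmemI _ hu
      · exact hmemI _ hv
    have hxcond : ∀ σ ∈ (cycChain k a (b :: w0 :: c)).support,
        σ ∈ (K.full I).faces ∧ σ.card = 2 := by
      intro σ hσ
      obtain ⟨u, v, rfl, hinf⟩ := support_cycChain k a (b :: w0 :: c) σ hσ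
      have hp := pair_infix_chain hchand hinf
      exact ⟨hp.1, Finset.card_pair hp.2⟩
    have hxb : bdry k m (cycChain k a (b :: w0 :: c)) = 0 :=
      bdry_cycChain k a (b :: w0 :: c) hnd (by simp)
    obtain ⟨y, hys, hyb⟩ := hH I (cycChain k a (b :: w0 :: c)) hxcond hxb
    have hy0 : y = 0 := by
      rw [← Finsupp.support_eq_empty]
      by_contra hne'
      obtain ⟨τ, hτs⟩ := Finset.nonempty_of_ne_empty hne'
      obtain ⟨hτfull, hτ3⟩ := hys τ hτs
      obtain ⟨u1, u2, u3, h12, h13, h23, rfl⟩ := Finset.card_eq_three.1 hτ3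
      have hu1 : u1 ∈ (a :: b :: w0 :: c) := hτfull.2 (by simp)
      have hu2 : u2 ∈ (a :: b :: w0 :: c) := hτfull.2 (by simp)
      have hu3 : u3 ∈ (a :: b :: w0 :: c) := hτfull.2 (by simp)
      obtain ⟨i1, hi1⟩ := List.mem_iff_get.1 hu1
      obtain ⟨i2, hi2⟩ := List.mem_iff_get.1 hu2
      obtain ⟨i3, hi3⟩ := List.mem_iff_get.1 hu3
      have adj : ∀ iA iB : Fin (a :: b :: w0 :: c).length,
          (a :: b :: w0 :: c).get iA ≠ (a :: b :: w0 :: c).get iB →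
          ({(a :: b :: w0 :: c).get iA, (a :: b :: w0 :: c).get iB} :
            Finset (Fin m)) ∈ K.faces →
          (iA.1 + 1) % (a :: b :: w0 :: c).length = iB.1 ∨
          (iB.1 + 1) % (a :: b :: w0 :: c).length = iA.1 := by
        intro iA iB hne hf
        by_contra hno
        push_neg at hno
        exact hch ⟨iA, iB, hf, fun h => hne (by rw [h]), hno.1, hno.2⟩
      have e12 : ({u1, u2} : Finset (Fin m)) ∈ K.faces :=
        K.down_closed hτfull.1 (by intro z hz; simp at hz ⊢; tauto)
      have e23 : ({u2, u3} : Finset (Fin m)) ∈ K.faces :=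
        K.down_closed hτfull.1 (by intro z hz; simp at hz ⊢; tauto)
      have e13 : ({u1, u3} : Finset (Fin m)) ∈ K.faces :=
        K.down_closed hτfull.1 (by intro z hz; simp at hz ⊢; tauto)
      have a12 := adj i1 i2 (by rw [hi1, hi2]; exact h12) (by rw [hi1, hi2]; exact e12)
      have a23 := adj i2 i3 (by rw [hi2, hi3]; exact h23) (by rw [hi2, hi3]; exact e23)
      have a13 := adj i1 i3 (by rw [hi1, hi3]; exact h13) (by rw [hi1, hi3]; exact e13)
      have hi12 : i1.1 ≠ i2.1 := by
        intro h
        exact h12 (by rw [← hi1, ← hi2, Fin.ext h])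
      have hi23 : i2.1 ≠ i3.1 := by
        intro h
        exact h23 (by rw [← hi2, ← hi3, Fin.ext h])
      have hi13 : i1.1 ≠ i3.1 := by
        intro h
        exact h13 (by rw [← hi1, ← hi3, Fin.ext h])
      exact no_tri (a :: b :: w0 :: c).length i1.1 i2.1 i3.1 h4 i1.2 i2.2 i3.2
        hi12 hi23 hi13 a12 a23 a13
    rw [hy0, map_zero] at hyb
    have hcoef := cycChain_coef k a b (w0 :: c) hnd (by simp)
    exact hcoef (by rw [← hyb]; rfl)
end
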